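/- Assume K = k_i + k_j = 2 and k_l = 0, and let w = (0, x⁻¹) ∈ V. Then E(w) ∈ B, F(w) ∈ B, w ∉ B, and every z ∈ V with E(z) ∈ B and F(z) ∈ B satisfies z ∈ ℂ·w + B. In other words, the 𝔰-invariant part of H¹(ℂℙ¹, T₂^{ij}) is one-dimensional, spanned by the class of w. -/

import Mathlib

noncomputable section

open LaurentPolynomial

/-- `L = ℂ[x, x⁻¹]`, the Laurent polynomials over `ℂ`. -/
abbrev L : Type := LaurentPolynomial ℂ

/-- The coefficient of `x^n` in a Laurent polynomial. -/
def coeffL (p : L) (n : ℤ) : ℂ := (AddMonoidAlgebra.coeff p : ℤ →₀ ℂ) n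

lemma coeffL_zero (n : ℤ) : coeffL 0 n = 0 := rfl

lemma coeffL_add (a b : L) (n : ℤ) : coeffL (a + b) n = coeffL a n + coeffL b n := by
  unfold coeffL; erw [Finsupp.add_apply]; rfl

lemma coeffL_smul (c : ℂ) (a : L) (n : ℤ) : coeffL (c • a) n = c * coeffL a n := by
  unfold coeffL; erw [Finsupp.smul_apply]; rfl

/-- `L₊`: Laurent polynomials involving only nonnegative powers of `x`. -/
def Lplus : Submodule ℂ L where
  carrier := {p | ∀ n : ℤ, n < 0 → coeffL p n = 0}
  zero_mem' := fun n _ => coeffL_zero n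
  add_mem' := by intro a b ha hb n hn; rw [coeffL_add, ha n hn, hb n hn, add_zero]
  smul_mem' := by intro c p hp n hn; rw [coeffL_smul, hp n hn, mul_zero]

/-- `L₋`: Laurent polynomials involving only nonpositive powers of `x`. -/
def Lminus : Submodule ℂ L where
  carrier := {p | ∀ n : ℤ, 0 < n → coeffL p n = 0}
  zero_mem' := fun n _ => coeffL_zero n
  add_mem' := by intro a b ha hb n hn; rw [coeffL_add, ha n hn, hb n hn, add_zero]
  smul_mem' := by intro c p hp n hn; rw [coeffL_smul, hp n hn, mul_zero]

/-- The derivative `d/dx` on Laurent polynomials. -/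
def D (p : L) : L := Finsupp.sum (AddMonoidAlgebra.coeff p : ℤ →₀ ℂ) fun n a => ((n : ℂ) * a) • T (n - 1)

/-- `V = L × L`, the model of Čech 1-cochains with values in `T₂^{ij}`:
a pair `(a, b)` encodes `a(x)ξᵢξⱼ∂/∂x + b(x)ξᵢξⱼξₗ∂/∂ξₗ` on `U₀ ∩ U₁`. -/
abbrev V : Type := L × L

/-- `B₀ = L₊ × L₊`: cochains holomorphic in `U₀`. -/
def B0 : Submodule ℂ V := Lplus.prod Lplus

/-- `B₁`: cochains holomorphic in `U₁`, i.e. pairs `(a, b)` with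
`x^(K-2)·a ∈ L₋` and `x^K·(b - kl·x⁻¹·a) ∈ L₋`. -/
def B1 (K kl : ℤ) : Submodule ℂ V :=
  Lminus.comap ((LinearMap.mulLeft ℂ (T (K - 2))).comp (LinearMap.fst ℂ L L)) ⊓
  Lminus.comap ((LinearMap.mulLeft ℂ (T K)).comp
    (LinearMap.snd ℂ L L - (kl : ℂ) • (LinearMap.mulLeft ℂ (T (-1))).comp (LinearMap.fst ℂ L L)))

/-- The coboundary subspace `B = B₀ + B₁`. -/
def B (K kl : ℤ) : Submodule ℂ V := B0 ⊔ B1 K kl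

/-- Action of `e = ∂/∂x` on cocycles: `E(a, b) = (a′, b′)`. -/
def Eop : V → V := fun p => (D p.1, D p.2)

/-- Action of `f = ∂/∂y` on cocycles:
`F(a, b) = ((2−K)·x·a − x²·a′, kl·a − K·x·b − x²·b′)`. -/
def Fop (K kl : ℤ) : V → V := fun p =>
  (((2 - K : ℤ) : ℂ) • (T 1 * p.1) - T 2 * D p.1,
   (kl : ℂ) • p.1 - (K : ℂ) • (T 1 * p.2) - T 2 * D p.2)

/- ### Auxiliary lemmas -/

lemma coeffL_sub (a b : L) (n : ℤ) : coeffL (a - b) n = coeffL a n - coeffL b n := by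
  unfold coeffL; erw [Finsupp.sub_apply]; rfl

lemma coeffL_T (k n : ℤ) : coeffL (T k : L) n = if k = n then 1 else 0 := by
  unfold coeffL; exact T_apply n k

lemma coeffL_Tmul (k : ℤ) (p : L) (n : ℤ) : coeffL (T k * p) n = coeffL p (n - k) := by
  unfold coeffL
  erw [AddMonoidAlgebra.coeff_single_mul_apply p (1:ℂ) k n, one_mul]
  congr 1; omega

lemma D_T_neg_one : D (T (-1) : L) = ((-1 : ℂ)) • T (-2) := by
  unfold D
  show Finsupp.sum (Finsupp.single (-1) (1:ℂ)) _ = _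
  rw [Finsupp.sum_single_index (by simp)]
  norm_num

lemma D_zero : D (0 : L) = 0 := by
  unfold D
  exact Finsupp.sum_zero_index (h := fun (n : ℤ) (a : ℂ) => ((n : ℂ) * a) • (T (n - 1) : L))

lemma mem_Lplus (p : L) : p ∈ Lplus ↔ ∀ n : ℤ, n < 0 → coeffL p n = 0 := Iff.rfl

lemma mem_Lminus (p : L) : p ∈ Lminus ↔ ∀ n : ℤ, 0 < n → coeffL p n = 0 := Iff.rfl

open Classical in
/-- The positive-degree truncation of a Laurent polynomial. -/
def posL (p : L) : L := AddMonoidAlgebra.ofCoeff (Finsupp.filter (fun n : ℤ => 0 ≤ n) (AddMonoidAlgebra.coeff p))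

lemma coeffL_posL (p : L) (n : ℤ) :
    coeffL (posL p) n = if 0 ≤ n then coeffL p n else 0 := by
  unfold coeffL posL
  rw [AddMonoidAlgebra.coeff_ofCoeff, Finsupp.filter_apply]

/-- The key characterization of `B` when `K = 2` and `kl = 0`. -/
lemma mem_B_iff (v : V) : v ∈ B 2 0 ↔ coeffL v.2 (-1) = 0 := by
  constructor
  · intro h
    rcases Submodule.mem_sup.mp h with ⟨p, hp, q, hq, hpq⟩
    have hp2 : coeffL p.2 (-1) = 0 := hp.2 (-1) (by norm_num)
    have hq2 : coeffL q.2 (-1) = 0 := by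
      have h2 := hq.2
      simp only [Submodule.mem_comap, LinearMap.comp_apply, LinearMap.sub_apply,
        LinearMap.smul_apply, Int.cast_zero, zero_smul, sub_zero,
        LinearMap.snd_apply, LinearMap.mulLeft_apply] at h2
      have := (mem_Lminus _).mp h2 1 (by norm_num)
      simp only [LinearMap.comp_apply, LinearMap.snd_apply, LinearMap.mulLeft_apply] at this
      rwa [coeffL_Tmul, show (1 : ℤ) - 2 = -1 by norm_num] at this
    have : v.2 = p.2 + q.2 := by rw [← hpq]; rfl
    rw [this, coeffL_add, hp2, hq2, add_zero]
  · intro h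
    refine Submodule.mem_sup.mpr ⟨(posL v.1, posL v.2), ⟨?_, ?_⟩,
      (v.1 - posL v.1, v.2 - posL v.2), ⟨?_, ?_⟩, ?_⟩
    · intro n hn; rw [coeffL_posL, if_neg (by omega)]
    · intro n hn; rw [coeffL_posL, if_neg (by omega)]
    · -- first B1 condition
      intro n hn
      simp only [LinearMap.comp_apply, LinearMap.fst_apply, LinearMap.mulLeft_apply]
      rw [coeffL_Tmul, coeffL_sub, coeffL_posL, if_pos (by omega), sub_self]
    · -- second B1 condition
      intro n hn
      simp only [LinearMap.comp_apply, LinearMap.sub_apply, LinearMap.smul_apply,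
        Int.cast_zero, zero_smul, sub_zero, LinearMap.snd_apply, LinearMap.mulLeft_apply]
      rw [coeffL_Tmul, coeffL_sub, coeffL_posL]
      rcases lt_or_ge (n - 2) 0 with h' | h'
      · rw [if_neg (by omega)]
        have : n - 2 = -1 := by omega
        rw [this, h, sub_zero]
      · rw [if_pos h', sub_self]
    · ext <;> simp

/-- If `K = kᵢ + kⱼ = 2` and `kl = 0`, the 𝔰-invariant part of
`H¹(ℂℙ¹, T₂^{ij})` is one-dimensional, spanned by the class of `w = (0, x⁻¹)`. -/
theorem stmt_5 (ki kj kl K : ℤ) (hK : K = ki + kj) (hK2 : K = 2) (hkl : kl = 0)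
    (w : V) (hw : w = ((0 : L), T (-1))) :
    Eop w ∈ B K kl ∧ Fop K kl w ∈ B K kl ∧ w ∉ B K kl ∧
    ∀ z : V, Eop z ∈ B K kl → Fop K kl z ∈ B K kl →
      ∃ c : ℂ, z - c • w ∈ B K kl := by
  subst hK2 hkl hw
  refine ⟨?_, ?_, ?_, ?_⟩
  · rw [mem_B_iff]
    show coeffL (D (T (-1))) (-1) = 0
    rw [D_T_neg_one, coeffL_smul, coeffL_T, if_neg (by norm_num), mul_zero]
  · rw [mem_B_iff]
    show coeffL (((0 : ℤ) : ℂ) • (0 : L) - ((2 : ℤ) : ℂ) • (T 1 * T (-1))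
      - T 2 * D (T (-1))) (-1) = 0
    rw [D_T_neg_one, coeffL_sub, coeffL_sub, coeffL_smul, coeffL_smul, coeffL_Tmul,
      coeffL_Tmul, coeffL_smul, coeffL_T, coeffL_T]
    norm_num
  · rw [mem_B_iff]
    show coeffL (T (-1)) (-1) ≠ 0
    rw [coeffL_T, if_pos rfl]
    norm_num
  · intro z _ _
    refine ⟨coeffL z.2 (-1), ?_⟩
    rw [mem_B_iff]
    show coeffL (z.2 - coeffL z.2 (-1) • T (-1)) (-1) = 0
    rw [coeffL_sub, coeffL_smul, coeffL_T, if_pos rfl, mul_one, sub_self]
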